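/- If A is a smooth ℂ-algebra, then the derivation Δ_A lies in the commutator subspace [A, Der(A, A⊗A)]; that is, there are finitely many elements aᵢ ∈ A and derivations δᵢ ∈ Der(A, A⊗A) such that Δ_A = Σᵢ (aᵢ·δᵢ − δᵢ·aᵢ), the actions being those of the inner A-bimodule structure on Der(A, A⊗A). -/

import Mathlib

open TensorProduct

set_option synthInstance.maxHeartbeats 1000000

universe u

section OutDer

variable (A : Type u) [Ring A] [Algebra ℂ A]

/-- The space `Der(A, A⊗A)` of ℂ-linear derivations `A → A ⊗[ℂ] A` with respect to the
*outer* bimodule structure on `A ⊗ A` (`a·(x⊗y)·b = ax ⊗ yb`), i.e. ℂ-linear maps with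
`δ(xy) = δ(x)·(1⊗y) + (x⊗1)·δ(y)`. -/
def OutDer : Submodule ℂ (A →ₗ[ℂ] A ⊗[ℂ] A) where
  carrier := {δ | ∀ x y : A,
    δ (x * y) = δ x * ((1 : A) ⊗ₜ[ℂ] y) + (x ⊗ₜ[ℂ] (1 : A)) * δ y}
  add_mem' := by
    intro f g hf hg x y
    simp only [LinearMap.add_apply, hf x y, hg x y, add_mul, mul_add]
    abel
  zero_mem' := by
    intro x y
    simp
  smul_mem' := by
    intro c f hf x y
    simp only [LinearMap.smul_apply, hf x y, smul_add, smul_mul_assoc, mul_smul_comm]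

variable {A}

/-- The inner bimodule action `δ ↦ a·δ·b` on `Der(A, A⊗A)` (coming from the inner
bimodule structure `a·(x⊗y)·b = xb ⊗ ay` on `A ⊗ A`). -/
noncomputable def innerLR (a : A) (δ : ↥(OutDer A)) (b : A) : ↥(OutDer A) :=
  ⟨(LinearMap.mulLeft ℂ ((1 : A) ⊗ₜ[ℂ] a)) ∘ₗ
      (LinearMap.mulRight ℂ (b ⊗ₜ[ℂ] (1 : A))) ∘ₗ (δ : A →ₗ[ℂ] A ⊗[ℂ] A), by
    intro x y
    have hδ := δ.2 x y
    have h1 : ((1 : A) ⊗ₜ[ℂ] y : A ⊗[ℂ] A) * (b ⊗ₜ[ℂ] (1 : A)) =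
        (b ⊗ₜ[ℂ] (1 : A) : A ⊗[ℂ] A) * ((1 : A) ⊗ₜ[ℂ] y) := by
      simp [Algebra.TensorProduct.tmul_mul_tmul]
    have h2 : ((1 : A) ⊗ₜ[ℂ] a : A ⊗[ℂ] A) * (x ⊗ₜ[ℂ] (1 : A)) =
        (x ⊗ₜ[ℂ] (1 : A) : A ⊗[ℂ] A) * ((1 : A) ⊗ₜ[ℂ] a) := by
      simp [Algebra.TensorProduct.tmul_mul_tmul]
    simp only [LinearMap.comp_apply, LinearMap.mulLeft_apply, LinearMap.mulRight_apply, hδ]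
    rw [add_mul, mul_add]
    congr 1
    · rw [mul_assoc ((δ : A →ₗ[ℂ] A ⊗[ℂ] A) x), h1, ← mul_assoc ((δ : A →ₗ[ℂ] A ⊗[ℂ] A) x),
        ← mul_assoc, ← mul_assoc]
    · rw [mul_assoc (x ⊗ₜ[ℂ] (1 : A) : A ⊗[ℂ] A), ← mul_assoc ((1 : A) ⊗ₜ[ℂ] a : A ⊗[ℂ] A),
        h2, mul_assoc]⟩

/-- The distinguished derivation `Δ_A : x ↦ x⊗1 − 1⊗x` in `Der(A, A⊗A)`. -/
noncomputable def deltaDer : ↥(OutDer A) :=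
  ⟨(TensorProduct.mk ℂ A A).flip 1 - TensorProduct.mk ℂ A A 1, by
    intro x y
    simp only [LinearMap.sub_apply, LinearMap.flip_apply, TensorProduct.mk_apply]
    rw [sub_mul, mul_sub]
    simp only [Algebra.TensorProduct.tmul_mul_tmul, one_mul, mul_one]
    abel⟩

end OutDer

section InnerOneSided

variable {A : Type u} [Ring A] [Algebra ℂ A]

/-- The left inner action `δ ↦ a·δ` on `Der(A, A⊗A)`. -/
noncomputable def innerL (a : A) (δ : ↥(OutDer A)) : ↥(OutDer A) :=
  ⟨(LinearMap.mulLeft ℂ ((1 : A) ⊗ₜ[ℂ] a)) ∘ₗ (δ : A →ₗ[ℂ] A ⊗[ℂ] A), by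
    intro x y
    have hδ := δ.2 x y
    have h2 : ((1 : A) ⊗ₜ[ℂ] a : A ⊗[ℂ] A) * (x ⊗ₜ[ℂ] (1 : A)) =
        (x ⊗ₜ[ℂ] (1 : A) : A ⊗[ℂ] A) * ((1 : A) ⊗ₜ[ℂ] a) := by
      simp [Algebra.TensorProduct.tmul_mul_tmul]
    simp only [LinearMap.comp_apply, LinearMap.mulLeft_apply, hδ]
    rw [mul_add]
    congr 1
    · rw [← mul_assoc]
    · rw [← mul_assoc, h2, mul_assoc]⟩

/-- The right inner action `δ ↦ δ·b` on `Der(A, A⊗A)`. -/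
noncomputable def innerR (δ : ↥(OutDer A)) (b : A) : ↥(OutDer A) :=
  ⟨(LinearMap.mulRight ℂ (b ⊗ₜ[ℂ] (1 : A))) ∘ₗ (δ : A →ₗ[ℂ] A ⊗[ℂ] A), by
    intro x y
    have hδ := δ.2 x y
    have h1 : ((1 : A) ⊗ₜ[ℂ] y : A ⊗[ℂ] A) * (b ⊗ₜ[ℂ] (1 : A)) =
        (b ⊗ₜ[ℂ] (1 : A) : A ⊗[ℂ] A) * ((1 : A) ⊗ₜ[ℂ] y) := by
      simp [Algebra.TensorProduct.tmul_mul_tmul]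
    simp only [LinearMap.comp_apply, LinearMap.mulRight_apply, hδ]
    rw [add_mul]
    congr 1
    · rw [mul_assoc, h1, ← mul_assoc]
    · rw [mul_assoc]⟩

end InnerOneSided




section Smooth

variable (B : Type u) [Ring B] [Algebra ℂ B]

/-- `B` as a module over its enveloping algebra `B^e = B ⊗[ℂ] Bᵐᵒᵖ`
(the action `(b₁ ⊗ b₂ᵒᵖ) • x = b₁ * x * b₂`). -/
noncomputable instance envModule : Module (B ⊗[ℂ] Bᵐᵒᵖ) B :=
  TensorProduct.Algebra.module

/-- `Ω¹B`: the kernel of the multiplication map `B ⊗[ℂ] B → B`, viewed as a module over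
the enveloping algebra `B^e = B ⊗[ℂ] Bᵐᵒᵖ` via the outer bimodule structure.  (Here
`B ⊗[ℂ] B` with the outer `B^e`-action is canonically identified with the left regular
module `B^e`, under which the multiplication map becomes `ξ ↦ ξ • 1`.) -/
noncomputable def Omega1 : Submodule (B ⊗[ℂ] Bᵐᵒᵖ) (B ⊗[ℂ] Bᵐᵒᵖ) :=
  LinearMap.ker (LinearMap.toSpanSingleton (B ⊗[ℂ] Bᵐᵒᵖ) B 1)

/-- A ℂ-algebra `B` is *smooth* if it is finitely generated as a ℂ-algebra and
`Ω¹B` is a finitely generated projective module over `B^e = B ⊗[ℂ] Bᵐᵒᵖ`. -/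
def IsSmoothAlgebra : Prop :=
  Algebra.FiniteType ℂ B ∧ Module.Finite (B ⊗[ℂ] Bᵐᵒᵖ) (Omega1 B) ∧
    Module.Projective (B ⊗[ℂ] Bᵐᵒᵖ) (Omega1 B)

end Smooth

section Proof3

open MulOpposite

set_option maxHeartbeats 1000000

variable {A : Type u} [Ring A] [Algebra ℂ A]

/-- Identification of `A ⊗ A` (outer bimodule) with the enveloping algebra `A ⊗ Aᵐᵒᵖ`. -/
noncomputable def eIso : (A ⊗[ℂ] A) ≃ₗ[ℂ] (A ⊗[ℂ] Aᵐᵒᵖ) :=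
  TensorProduct.congr (LinearEquiv.refl ℂ A) (opLinearEquiv ℂ)

lemma eIso_tmul (x y : A) : eIso (x ⊗ₜ[ℂ] y) = x ⊗ₜ[ℂ] (op y) := by simp [eIso]

lemma eIso_symm_tmul (x : A) (z : Aᵐᵒᵖ) : eIso.symm (x ⊗ₜ[ℂ] z) = x ⊗ₜ[ℂ] z.unop := by
  simp [eIso]

lemma eIso_symm_mul_left (a b : A) (θ : A ⊗[ℂ] Aᵐᵒᵖ) :
    eIso.symm ((a ⊗ₜ[ℂ] op b) * θ) = (a ⊗ₜ[ℂ] (1 : A)) * eIso.symm θ * ((1 : A) ⊗ₜ[ℂ] b) := by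
  induction θ using TensorProduct.induction_on with
  | zero => simp
  | tmul x z =>
      simp only [Algebra.TensorProduct.tmul_mul_tmul, eIso_symm_tmul]
      simp [Algebra.TensorProduct.tmul_mul_tmul, mul_assoc]
  | add θ η ihθ ihη => simp only [mul_add, map_add, add_mul, ihθ, ihη]

lemma eIso_symm_mul_right (a b : A) (θ : A ⊗[ℂ] Aᵐᵒᵖ) :
    eIso.symm (θ * (b ⊗ₜ[ℂ] op a)) = ((1 : A) ⊗ₜ[ℂ] a) * eIso.symm θ * (b ⊗ₜ[ℂ] (1 : A)) := by
  induction θ using TensorProduct.induction_on with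
  | zero => simp
  | tmul x z =>
      simp only [Algebra.TensorProduct.tmul_mul_tmul, eIso_symm_tmul]
      simp [Algebra.TensorProduct.tmul_mul_tmul, mul_assoc]
  | add θ η ihθ ihη => simp only [mul_add, map_add, add_mul, ihθ, ihη]

/-- The derivation `Δ'` with values in the enveloping algebra. -/
noncomputable def DeltaE : A →ₗ[ℂ] A ⊗[ℂ] Aᵐᵒᵖ :=
  (TensorProduct.mk ℂ A Aᵐᵒᵖ).flip (op 1) -
    (TensorProduct.mk ℂ A Aᵐᵒᵖ 1) ∘ₗ (opLinearEquiv ℂ (M := A)).toLinearMap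

lemma DeltaE_apply (x : A) : DeltaE x = x ⊗ₜ[ℂ] op (1 : A) - (1 : A) ⊗ₜ[ℂ] op x := rfl

lemma DeltaE_mem (x : A) : DeltaE x ∈ Omega1 A := by
  have : (LinearMap.toSpanSingleton (A ⊗[ℂ] Aᵐᵒᵖ) A 1) (DeltaE x) = 0 := by
    rw [DeltaE_apply, map_sub]
    have h1 : (LinearMap.toSpanSingleton (A ⊗[ℂ] Aᵐᵒᵖ) A 1) (x ⊗ₜ[ℂ] op (1 : A)) = x := by
      show x * ((1 : A) * 1) = x
      simp
    have h2 : (LinearMap.toSpanSingleton (A ⊗[ℂ] Aᵐᵒᵖ) A 1) ((1 : A) ⊗ₜ[ℂ] op x) = x := by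
      show (1 : A) * ((1 : A) * x) = x
      simp
    rw [h1, h2, sub_self]
  exact LinearMap.mem_ker.mpr this

/-- `Δ'` as a map into `Ω¹A`. -/
noncomputable def DeltaOm : A →ₗ[ℂ] ↥(Omega1 A) where
  toFun x := ⟨DeltaE x, DeltaE_mem x⟩
  map_add' x y := by ext; simp
  map_smul' c x := by ext; simp

lemma DeltaOm_coe (x : A) : ((DeltaOm x : ↥(Omega1 A)) : A ⊗[ℂ] Aᵐᵒᵖ) = DeltaE x := rfl

lemma DeltaOm_mul (x y : A) :
    DeltaOm (x * y) = (x ⊗ₜ[ℂ] op (1 : A)) • DeltaOm y + ((1 : A) ⊗ₜ[ℂ] op y) • DeltaOm x := by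
  ext
  rw [Submodule.coe_add, Submodule.coe_smul, Submodule.coe_smul, DeltaOm_coe, DeltaOm_coe,
    DeltaOm_coe, smul_eq_mul, smul_eq_mul]
  simp only [DeltaE_apply, mul_sub, Algebra.TensorProduct.tmul_mul_tmul,
    one_mul, mul_one, op_mul, op_one]
  abel

/-- The outer derivation associated to an `A^e`-linear functional on `Ω¹A`. -/
noncomputable def derOf (φ : ↥(Omega1 A) →ₗ[A ⊗[ℂ] Aᵐᵒᵖ] (A ⊗[ℂ] Aᵐᵒᵖ)) : ↥(OutDer A) := by
  refine ⟨eIso.symm.toLinearMap ∘ₗ (φ.restrictScalars ℂ) ∘ₗ DeltaOm, ?_⟩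
  intro x y
  simp only [LinearMap.comp_apply, LinearEquiv.coe_coe, LinearMap.coe_restrictScalars]
  rw [DeltaOm_mul, map_add, map_smul, map_smul, smul_eq_mul, smul_eq_mul, map_add,
    eIso_symm_mul_left, eIso_symm_mul_left, ← Algebra.TensorProduct.one_def, mul_one, one_mul]
  exact add_comm _ _

/-- Main auxiliary map: `x ↦ e⁻¹(φ(Δ'(x)) * g)`. -/
noncomputable def Dmap (φ : ↥(Omega1 A) →ₗ[A ⊗[ℂ] Aᵐᵒᵖ] (A ⊗[ℂ] Aᵐᵒᵖ))
    (g : A ⊗[ℂ] Aᵐᵒᵖ) : A →ₗ[ℂ] A ⊗[ℂ] A :=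
  eIso.symm.toLinearMap ∘ₗ (LinearMap.mulRight ℂ g) ∘ₗ (φ.restrictScalars ℂ) ∘ₗ DeltaOm

lemma Dmap_apply (φ : ↥(Omega1 A) →ₗ[A ⊗[ℂ] Aᵐᵒᵖ] (A ⊗[ℂ] Aᵐᵒᵖ))
    (g : A ⊗[ℂ] Aᵐᵒᵖ) (x : A) : Dmap φ g x = eIso.symm (φ (DeltaOm x) * g) := rfl

lemma derOf_apply (φ : ↥(Omega1 A) →ₗ[A ⊗[ℂ] Aᵐᵒᵖ] (A ⊗[ℂ] Aᵐᵒᵖ)) (x : A) :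
    ((derOf φ : ↥(OutDer A)) : A →ₗ[ℂ] A ⊗[ℂ] A) x = eIso.symm (φ (DeltaOm x)) := rfl

/-- Right multiplication tweak of an `A^e`-linear functional. -/
noncomputable def phiMulR (φ : ↥(Omega1 A) →ₗ[A ⊗[ℂ] Aᵐᵒᵖ] (A ⊗[ℂ] Aᵐᵒᵖ))
    (e : A ⊗[ℂ] Aᵐᵒᵖ) : ↥(Omega1 A) →ₗ[A ⊗[ℂ] Aᵐᵒᵖ] (A ⊗[ℂ] Aᵐᵒᵖ) where
  toFun η := φ η * e
  map_add' a b := by simp [add_mul]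
  map_smul' r η := by simp [smul_eq_mul, mul_assoc]

lemma Dmap_generator (φ : ↥(Omega1 A) →ₗ[A ⊗[ℂ] Aᵐᵒᵖ] (A ⊗[ℂ] Aᵐᵒᵖ)) (c : A) :
    Dmap φ (DeltaE c) =
      ((OutDer A).subtype) (innerL c (-(derOf φ)) - innerR (-(derOf φ)) c) := by
  apply LinearMap.ext
  intro x
  have h1 : eIso.symm (φ (DeltaOm x) * (c ⊗ₜ[ℂ] op (1 : A))) =
      eIso.symm (φ (DeltaOm x)) * (c ⊗ₜ[ℂ] (1 : A)) := by
    rw [eIso_symm_mul_right, ← Algebra.TensorProduct.one_def, one_mul]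
  have h2 : eIso.symm (φ (DeltaOm x) * ((1 : A) ⊗ₜ[ℂ] op c)) =
      ((1 : A) ⊗ₜ[ℂ] c) * eIso.symm (φ (DeltaOm x)) := by
    rw [eIso_symm_mul_right, ← Algebra.TensorProduct.one_def, mul_one]
  rw [Dmap_apply, DeltaE_apply, mul_sub, map_sub, h1, h2]
  show _ = ((innerL c (-(derOf φ)) : ↥(OutDer A)) : A →ₗ[ℂ] A ⊗[ℂ] A) x -
    ((innerR (-(derOf φ)) c : ↥(OutDer A)) : A →ₗ[ℂ] A ⊗[ℂ] A) x
  simp only [innerL, innerR, LinearMap.comp_apply, LinearMap.mulLeft_apply,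
    LinearMap.mulRight_apply, Submodule.coe_neg, LinearMap.neg_apply, derOf_apply,
    mul_neg, neg_mul]
  abel

lemma omega_le_span :
    Omega1 A ≤ Submodule.span (A ⊗[ℂ] Aᵐᵒᵖ) (Set.range ⇑(DeltaE (A := A))) := by
  intro ω hω
  have hμ : (LinearMap.toSpanSingleton (A ⊗[ℂ] Aᵐᵒᵖ) A 1) ω = 0 := LinearMap.mem_ker.mp hω
  have hν : ∀ ξ : A ⊗[ℂ] Aᵐᵒᵖ,
      ξ - ((LinearMap.toSpanSingleton (A ⊗[ℂ] Aᵐᵒᵖ) A 1) ξ) ⊗ₜ[ℂ] (op (1 : A)) ∈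
        Submodule.span (A ⊗[ℂ] Aᵐᵒᵖ) (Set.range ⇑(DeltaE (A := A))) := by
    intro ξ
    induction ξ using TensorProduct.induction_on with
    | zero =>
        rw [map_zero, TensorProduct.zero_tmul, sub_zero]
        exact Submodule.zero_mem _
    | tmul x z =>
        have hz : (LinearMap.toSpanSingleton (A ⊗[ℂ] Aᵐᵒᵖ) A 1) (x ⊗ₜ[ℂ] z) = x * z.unop := by
          show x * ((1 : A) * z.unop) = x * z.unop
          rw [one_mul]
        rw [hz]
        have key : x ⊗ₜ[ℂ] z - (x * z.unop) ⊗ₜ[ℂ] op (1 : A) =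
            -((x ⊗ₜ[ℂ] op (1 : A)) • DeltaE z.unop) := by
          rw [smul_eq_mul, DeltaE_apply]
          simp only [mul_sub, Algebra.TensorProduct.tmul_mul_tmul, mul_one, one_mul,
            op_one, op_unop]
          abel
        rw [key]
        exact neg_mem (Submodule.smul_mem _ _ (Submodule.subset_span ⟨z.unop, rfl⟩))
    | add ξ η ihξ ihη =>
        have : ξ + η - ((LinearMap.toSpanSingleton (A ⊗[ℂ] Aᵐᵒᵖ) A 1) (ξ + η)) ⊗ₜ[ℂ] op (1:A) =
            (ξ - ((LinearMap.toSpanSingleton (A ⊗[ℂ] Aᵐᵒᵖ) A 1) ξ) ⊗ₜ[ℂ] op (1:A)) +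
            (η - ((LinearMap.toSpanSingleton (A ⊗[ℂ] Aᵐᵒᵖ) A 1) η) ⊗ₜ[ℂ] op (1:A)) := by
          rw [map_add, TensorProduct.add_tmul]
          abel
        rw [this]
        exact add_mem ihξ ihη
  have := hν ω
  rw [hμ] at this
  simpa using this

lemma key_mem (g : A ⊗[ℂ] Aᵐᵒᵖ)
    (hg : g ∈ Submodule.span (A ⊗[ℂ] Aᵐᵒᵖ) (Set.range ⇑(DeltaE (A := A)))) :
    ∀ φ : ↥(Omega1 A) →ₗ[A ⊗[ℂ] Aᵐᵒᵖ] (A ⊗[ℂ] Aᵐᵒᵖ),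
      Dmap φ g ∈ (Submodule.span ℂ
        {d : ↥(OutDer A) | ∃ (a : A) (δ : ↥(OutDer A)),
          d = innerL a δ - innerR δ a}).map (OutDer A).subtype := by
  induction hg using Submodule.span_induction with
  | mem g hgen =>
      intro φ
      obtain ⟨c, rfl⟩ := hgen
      rw [Dmap_generator]
      exact Submodule.mem_map_of_mem
        (Submodule.subset_span ⟨c, -(derOf φ), rfl⟩)
  | zero =>
      intro φ
      have : Dmap (A := A) φ 0 = 0 := by
        apply LinearMap.ext; intro x
        rw [Dmap_apply, mul_zero, map_zero]; rfl
      rw [this]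
      exact Submodule.zero_mem _
  | add g g' _ _ ihg ihg' =>
      intro φ
      have : Dmap (A := A) φ (g + g') = Dmap φ g + Dmap φ g' := by
        apply LinearMap.ext; intro x
        simp only [Dmap_apply, mul_add, map_add, LinearMap.add_apply]
      rw [this]
      exact add_mem (ihg φ) (ihg' φ)
  | smul e g _ ih =>
      intro φ
      have : Dmap (A := A) φ (e • g) = Dmap (phiMulR φ e) g := by
        apply LinearMap.ext; intro x
        simp only [Dmap_apply, smul_eq_mul, phiMulR, LinearMap.coe_mk, AddHom.coe_mk,
          mul_assoc]
      rw [this]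
      exact ih (phiMulR φ e)

end Proof3

set_option maxHeartbeats 2000000

/-- If `A` is a smooth ℂ-algebra, then the distinguished derivation
`Δ_A : x ↦ x⊗1 − 1⊗x` lies in the commutator subspace `[A, Der(A, A⊗A)]`, i.e. in the
ℂ-linear span of the elements `a·δ − δ·a` for the inner bimodule structure. -/
theorem stmt3 (A : Type u) [Ring A] [Algebra ℂ A] (hA : IsSmoothAlgebra A) :
    deltaDer (A := A) ∈ Submodule.span ℂ
      {d : ↥(OutDer A) | ∃ (a : A) (δ : ↥(OutDer A)), d = innerL a δ - innerR δ a} := by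
  classical
  obtain ⟨-, hfin, hproj⟩ := hA
  haveI := hfin
  haveI := hproj
  obtain ⟨n, π, hπ⟩ := Module.Finite.exists_fin' (A ⊗[ℂ] Aᵐᵒᵖ) ↥(Omega1 A)
  obtain ⟨s, hs⟩ := Module.projective_lifting_property π (LinearMap.id) hπ
  set g : Fin n → ↥(Omega1 A) := fun i => π (Pi.single i 1) with hgdef
  set φ : Fin n → (↥(Omega1 A) →ₗ[A ⊗[ℂ] Aᵐᵒᵖ] (A ⊗[ℂ] Aᵐᵒᵖ)) :=
    fun i => (LinearMap.proj i) ∘ₗ s with hφdef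
  have hrep : ∀ ω : ↥(Omega1 A), (ω : A ⊗[ℂ] Aᵐᵒᵖ) = ∑ i, φ i ω * ((g i : A ⊗[ℂ] Aᵐᵒᵖ)) := by
    intro ω
    have h1 : π (s ω) = ω := by
      have := LinearMap.ext_iff.mp hs ω
      simpa using this
    have h2 : s ω = ∑ i, (s ω i) • (Pi.single i (1 : A ⊗[ℂ] Aᵐᵒᵖ) : Fin n → A ⊗[ℂ] Aᵐᵒᵖ) := by
      funext j
      rw [Finset.sum_apply]
      simp [Pi.single_apply, mul_ite, Finset.sum_ite_eq']
    have h3 : ω = ∑ i, (s ω i) • g i := by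
      conv_lhs => rw [← h1, h2]
      rw [map_sum]
      exact Finset.sum_congr rfl fun i _ => by rw [map_smul]
    conv_lhs => rw [h3]
    rw [AddSubmonoidClass.coe_finset_sum]
    exact Finset.sum_congr rfl fun i _ => by
      rw [Submodule.coe_smul, smul_eq_mul]; rfl
  have hval : ((deltaDer (A := A) : ↥(OutDer A)) : A →ₗ[ℂ] A ⊗[ℂ] A) =
      ∑ i, Dmap (φ i) ((g i : A ⊗[ℂ] Aᵐᵒᵖ)) := by
    apply LinearMap.ext
    intro x
    have lhs : ((deltaDer (A := A) : ↥(OutDer A)) : A →ₗ[ℂ] A ⊗[ℂ] A) x =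
        x ⊗ₜ[ℂ] (1 : A) - (1 : A) ⊗ₜ[ℂ] x := rfl
    rw [lhs, LinearMap.sum_apply]
    have hsum2 : ∑ i, Dmap (φ i) ((g i : A ⊗[ℂ] Aᵐᵒᵖ)) x =
        eIso.symm (∑ i, φ i (DeltaOm x) * ((g i : A ⊗[ℂ] Aᵐᵒᵖ))) := by
      rw [map_sum]
      exact Finset.sum_congr rfl fun i _ => rfl
    rw [hsum2, ← hrep (DeltaOm x), DeltaOm_coe, DeltaE_apply, map_sub,
      eIso_symm_tmul, eIso_symm_tmul, MulOpposite.unop_op, MulOpposite.unop_op]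
  have hsum : ((deltaDer (A := A) : ↥(OutDer A)) : A →ₗ[ℂ] A ⊗[ℂ] A) ∈
      (Submodule.span ℂ
        {d : ↥(OutDer A) | ∃ (a : A) (δ : ↥(OutDer A)),
          d = innerL a δ - innerR δ a}).map (OutDer A).subtype := by
    rw [hval]
    exact Submodule.sum_mem _ fun i _ =>
      key_mem ((g i : A ⊗[ℂ] Aᵐᵒᵖ)) (omega_le_span (g i).2) (φ i)
  obtain ⟨d, hd, hdv⟩ := hsum
  have hde : d = deltaDer (A := A) := Subtype.ext hdv
  rwa [hde] at hd
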